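/- Let g : ℝ → [0,∞) be integrable, m1, m2 probability measures on ℝ, Φ1, Φ2 ≥ 0, λ = Φ1/(Φ1+Φ2) (with Φ2 > 0), and m = λ m1 + (1-λ) m2. Then S(Φ1+Φ2, m) - S(Φ1, m1) ≤ Φ2, where S(Φ, μ) = 1 - exp(-Φ - ∫g) - ∫ g(s) exp(-∫_s^∞ g(t)dt) exp(-Φ·μ([s,∞))) ds. -/

import Mathlib

open MeasureTheory Set Filter Real Topology

lemma keyAux (g : ℝ → ℝ) (hgm : Measurable g) (hg : Integrable g) (hg0 : ∀ s, 0 ≤ g s) :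
    ∫ s, g s * Real.exp (-(∫ t in Set.Ici s, g t)) ≤ 1 - Real.exp (-(∫ t, g t)) := by
  set M : ℝ := ∫ t, g t with hM
  set H : ℝ → ℝ := fun s => ∫ t in Iic s, g t with hH
  have hgnn : ∀ᵐ t, 0 ≤ g t := Eventually.of_forall hg0
  have hHmono : Monotone H := by
    intro a b hab
    exact setIntegral_mono_set hg.integrableOn (ae_restrict_of_ae hgnn)
      (HasSubset.Subset.eventuallyLE (Iic_subset_Iic.2 hab))
  have h0 : ∀ s : ℝ, H s = (∫ t in (0:ℝ)..s, g t) + H 0 := by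
    intro s
    simp only [hH]
    rw [← intervalIntegral.integral_Iic_sub_Iic hg.integrableOn hg.integrableOn]
    ring
  have hHcont : Continuous H := by
    have h2 := (intervalIntegral.continuous_primitive
      (fun a b => hg.intervalIntegrable) (0 : ℝ)).add (continuous_const (y := H 0))
    exact h2.congr fun s => (h0 s).symm
  have hHG : ∀ s, H s + (∫ t in Ici s, g t) = M := by
    intro s
    have h1 : (∫ t in Iic s ∪ Ioi s, g t) = H s + ∫ t in Ioi s, g t :=
      setIntegral_union (Iic_disjoint_Ioi le_rfl) measurableSet_Ioi hg.integrableOn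
        hg.integrableOn
    rw [Iic_union_Ioi, setIntegral_univ] at h1
    rw [integral_Ici_eq_integral_Ioi]
    linarith [h1]
  have hHle : ∀ s, H s ≤ M := by
    intro s
    linarith [hHG s, setIntegral_nonneg (measurableSet_Ici (a := s)) (fun t _ => hg0 t) (μ := volume)]
  set SH : StieltjesFunction ℝ := ⟨H, hHmono, fun x => hHcont.continuousAt.continuousWithinAt⟩ with hSH
  have hSHmeas : SH.measure = volume.withDensity (fun t => ENNReal.ofReal (g t)) := by
    refine Measure.ext_of_Ioc _ _ (fun a b hab => ?_)
    rw [SH.measure_Ioc, withDensity_apply _ measurableSet_Ioc,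
      ← ofReal_integral_eq_lintegral_ofReal hg.integrableOn (ae_restrict_of_ae hgnn)]
    congr 1
    have : SH b - SH a = H b - H a := rfl
    rw [this]
    simp only [hH]
    rw [← intervalIntegral.integral_of_le hab.le,
      ← intervalIntegral.integral_Iic_sub_Iic hg.integrableOn hg.integrableOn]
  have hHderiv : ∀ᵐ x, HasDerivAt H (g x) x := by
    filter_upwards [SH.ae_hasDerivAt,
      Measure.rnDeriv_withDensity volume (hgm.ennreal_ofReal)] with x hx hx2
    rw [hSHmeas, hx2] at hx
    simpa [ENNReal.toReal_ofReal (hg0 x)] using hx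
  set F : ℝ → ℝ := fun s => Real.exp (H s - M) with hF
  have hFmono : Monotone F := fun a b hab => Real.exp_le_exp.2 (by linarith [hHmono hab])
  have hFcont : Continuous F := Real.continuous_exp.comp (hHcont.sub continuous_const)
  set SF : StieltjesFunction ℝ := ⟨F, hFmono, fun x => hFcont.continuousAt.continuousWithinAt⟩ with hSF
  have hFderiv : ∀ᵐ x, HasDerivAt F (Real.exp (H x - M) * g x) x := by
    filter_upwards [hHderiv] with x hx
    simpa [mul_comm] using (hx.sub_const M).exp
  have hae : ∀ᵐ x, (SF.measure.rnDeriv volume x).toReal = Real.exp (H x - M) * g x := by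
    filter_upwards [SF.ae_hasDerivAt, hFderiv] with x hx hx2
    exact hx.unique hx2
  -- limits
  have hHtop : Tendsto H atTop (𝓝 M) := by
    have := tendsto_setIntegral_of_monotone (μ := volume) (f := g)
      (s := fun i : ℝ => Iic i) (fun i => measurableSet_Iic)
      (fun a b hab => Iic_subset_Iic.2 hab) (by rw [iUnion_Iic]; exact hg.integrableOn)
    simpa [iUnion_Iic, setIntegral_univ] using this
  have hHbot : Tendsto H atBot (𝓝 0) := by
    have h1 := tendsto_setIntegral_of_antitone (μ := volume) (f := g)
      (s := fun i : ℝ => Iic (-i)) (fun i => measurableSet_Iic)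
      (fun a b hab => Iic_subset_Iic.2 (by linarith)) ⟨0, hg.integrableOn⟩
    have h2 : ⋂ i : ℝ, Iic (-i) = (∅ : Set ℝ) := by
      ext x
      simp only [mem_iInter, mem_Iic, mem_empty_iff_false, iff_false, not_forall, not_le]
      exact ⟨-(x - 1), by linarith⟩
    rw [h2] at h1
    simp only [Measure.restrict_empty, integral_zero_measure] at h1
    exact (h1.comp tendsto_neg_atBot_atTop).congr fun x => by
      simp [hH]
  have hFtop : Tendsto F atTop (𝓝 1) := by
    have : Tendsto (fun s => H s - M) atTop (𝓝 0) := by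
      simpa using hHtop.sub_const M
    simpa [hF, Function.comp_def] using (Real.continuous_exp.continuousAt (x := (0:ℝ))).tendsto.comp this
  have hFbot : Tendsto F atBot (𝓝 (Real.exp (-M))) := by
    have : Tendsto (fun s => H s - M) atBot (𝓝 (0 - M)) := hHbot.sub_const M
    simpa [hF, Function.comp_def] using (Real.continuous_exp.continuousAt (x := (0 - M : ℝ))).tendsto.comp this
  have hμuniv : SF.measure univ = ENNReal.ofReal (1 - Real.exp (-M)) :=
    SF.measure_univ hFbot hFtop
  -- integrand rewriting
  have hexp : ∀ s, Real.exp (-(∫ t in Ici s, g t)) = F s := by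
    intro s
    congr 1
    linarith [hHG s]
  have hMnn : 0 ≤ M := integral_nonneg hg0
  calc ∫ s, g s * Real.exp (-(∫ t in Ici s, g t))
      = ∫ s, (SF.measure.rnDeriv volume s).toReal := by
        refine integral_congr_ae ?_
        filter_upwards [hae] with x hx
        rw [hexp x, hx]; ring
    _ = (∫⁻ s, ENNReal.ofReal ((SF.measure.rnDeriv volume s).toReal)).toReal := by
        rw [integral_eq_lintegral_of_nonneg_ae]
        · exact Eventually.of_forall fun x => ENNReal.toReal_nonneg
        · exact (Measure.measurable_rnDeriv _ _).ennreal_toReal.aestronglyMeasurable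
    _ ≤ (SF.measure univ).toReal := by
        refine ENNReal.toReal_mono (by simp [hμuniv]) ?_
        refine le_trans (lintegral_mono fun x => ENNReal.ofReal_toReal_le) ?_
        exact Measure.lintegral_rnDeriv_le
    _ = 1 - Real.exp (-M) := by
        rw [hμuniv, ENNReal.toReal_ofReal]
        have : Real.exp (-M) ≤ 1 := Real.exp_le_one_iff.2 (by linarith)
        linarith

lemma key (g : ℝ → ℝ) (hg : Integrable g) (hg0 : ∀ s, 0 ≤ g s) :
    ∫ s, g s * Real.exp (-(∫ t in Set.Ici s, g t)) ≤ 1 - Real.exp (-(∫ t, g t)) := by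
  set g' : ℝ → ℝ := fun x => max (hg.1.mk g x) 0 with hg'
  have hg'm : Measurable g' := (hg.1.stronglyMeasurable_mk.measurable).max measurable_const
  have hgg' : g =ᵐ[volume] g' := by
    filter_upwards [hg.1.ae_eq_mk] with x hx
    rw [hg', hx]
    exact (max_eq_left (hx ▸ hg0 x)).symm
  have hg'int : Integrable g' := hg.congr hgg'
  have hG : ∀ s, (∫ t in Set.Ici s, g t) = ∫ t in Set.Ici s, g' t :=
    fun s => integral_congr_ae (ae_restrict_of_ae hgg')
  have hMeq : (∫ t, g t) = ∫ t, g' t := integral_congr_ae hgg'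
  have h1 : (∫ s, g s * Real.exp (-(∫ t in Set.Ici s, g t)))
      = ∫ s, g' s * Real.exp (-(∫ t in Set.Ici s, g' t)) := by
    refine integral_congr_ae ?_
    filter_upwards [hgg'] with x hx
    rw [hx, hG]
  rw [h1, hMeq]
  exact keyAux g' hg'm hg'int (fun s => le_max_right _ _)

/-- The pointwise integrand of the shaded sunlight functional: `Φ` is the projected
density, `m` the disintegration measure along the line, and `g` the density of the
shading measure along the line. -/
noncomputable def shadedSun (g : ℝ → ℝ) (Φ : ℝ) (m : Measure ℝ) : ℝ :=
  1 - Real.exp (-(Φ + ∫ t, g t)) -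
    ∫ s, g s * Real.exp (-(∫ t in Set.Ici s, g t)) *
      Real.exp (-(Φ * (m (Set.Ici s)).toReal))

/-- The key pointwise estimate: with `λ = Φ1/(Φ1+Φ2)` and `m = λ m1 + (1-λ) m2`,
`S(Φ1+Φ2, m) - S(Φ1, m1) ≤ Φ2`. -/
theorem stmt_11 (g : ℝ → ℝ) (hg : Integrable g) (hg0 : ∀ s, 0 ≤ g s)
    (Φ1 Φ2 : ℝ) (hΦ1 : 0 ≤ Φ1) (hΦ2 : 0 < Φ2)
    (m1 m2 m : Measure ℝ) [IsProbabilityMeasure m1] [IsProbabilityMeasure m2]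
    (hm : m = ENNReal.ofReal (Φ1 / (Φ1 + Φ2)) • m1 +
        ENNReal.ofReal (1 - Φ1 / (Φ1 + Φ2)) • m2) :
    shadedSun g (Φ1 + Φ2) m - shadedSun g Φ1 m1 ≤ Φ2 := by
  have hΦ12 : 0 < Φ1 + Φ2 := by linarith
  have hlam0 : 0 ≤ Φ1 / (Φ1 + Φ2) := div_nonneg hΦ1 hΦ12.le
  have hlam1 : Φ1 / (Φ1 + Φ2) ≤ 1 := (div_le_one hΦ12).2 (by linarith)
  have hgnn : ∀ᵐ t, 0 ≤ g t := Filter.Eventually.of_forall hg0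
  have hGnn : ∀ s : ℝ, 0 ≤ ∫ t in Set.Ici s, g t :=
    fun s => setIntegral_nonneg measurableSet_Ici fun t _ => hg0 t
  have hGanti : Antitone (fun s : ℝ => ∫ t in Set.Ici s, g t) := by
    intro a b hab
    exact setIntegral_mono_set hg.integrableOn (ae_restrict_of_ae hgnn)
      (HasSubset.Subset.eventuallyLE (Set.Ici_subset_Ici.2 hab))
  have hmfin : ∀ s : ℝ, m (Set.Ici s) ≠ ⊤ := by
    intro s
    rw [hm]
    simp only [Measure.coe_add, Measure.coe_smul, Pi.add_apply, Pi.smul_apply, smul_eq_mul]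
    exact ENNReal.add_ne_top.2 ⟨ENNReal.mul_ne_top ENNReal.ofReal_ne_top (measure_ne_top _ _),
      ENNReal.mul_ne_top ENNReal.ofReal_ne_top (measure_ne_top _ _)⟩
  have hcs : ∀ s : ℝ, (Φ1 + Φ2) * (m (Set.Ici s)).toReal
      = Φ1 * (m1 (Set.Ici s)).toReal + Φ2 * (m2 (Set.Ici s)).toReal := by
    intro s
    have hms : m (Set.Ici s) = ENNReal.ofReal (Φ1 / (Φ1 + Φ2)) * m1 (Set.Ici s)
        + ENNReal.ofReal (1 - Φ1 / (Φ1 + Φ2)) * m2 (Set.Ici s) := by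
      rw [hm]
      simp [Measure.coe_add, Measure.coe_smul, Pi.add_apply, Pi.smul_apply, smul_eq_mul]
    rw [hms, ENNReal.toReal_add
        (ENNReal.mul_ne_top ENNReal.ofReal_ne_top (measure_ne_top _ _))
        (ENNReal.mul_ne_top ENNReal.ofReal_ne_top (measure_ne_top _ _)),
      ENNReal.toReal_mul, ENNReal.toReal_mul, ENNReal.toReal_ofReal hlam0,
      ENNReal.toReal_ofReal (by linarith : (0:ℝ) ≤ 1 - Φ1 / (Φ1 + Φ2))]
    field_simp
    ring
  -- generic integrability
  have aux : ∀ c : ℝ → ℝ, Antitone c → (∀ s, 0 ≤ c s) →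
      Integrable (fun s => g s * Real.exp (-(∫ t in Set.Ici s, g t)) * Real.exp (-(c s))) := by
    intro c hc hc0
    refine Integrable.mono hg ?_ ?_
    · exact (hg.1.mul
        (Real.measurable_exp.comp hGanti.measurable.neg).aestronglyMeasurable).mul
        (Real.measurable_exp.comp hc.measurable.neg).aestronglyMeasurable
    · refine Filter.Eventually.of_forall fun s => ?_
      rw [Real.norm_eq_abs, Real.norm_eq_abs,
        abs_of_nonneg (mul_nonneg (mul_nonneg (hg0 s) (Real.exp_pos _).le) (Real.exp_pos _).le),
        abs_of_nonneg (hg0 s)]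
      have e1 : Real.exp (-(∫ t in Set.Ici s, g t)) ≤ 1 :=
        Real.exp_le_one_iff.2 (neg_nonpos.2 (hGnn s))
      have e2 : Real.exp (-(c s)) ≤ 1 := Real.exp_le_one_iff.2 (neg_nonpos.2 (hc0 s))
      calc g s * Real.exp (-(∫ t in Set.Ici s, g t)) * Real.exp (-(c s))
          ≤ g s * Real.exp (-(∫ t in Set.Ici s, g t)) * 1 :=
            mul_le_mul_of_nonneg_left e2 (mul_nonneg (hg0 s) (Real.exp_pos _).le)
        _ ≤ g s * 1 * 1 :=
            mul_le_mul_of_nonneg_right (mul_le_mul_of_nonneg_left e1 (hg0 s)) (by norm_num)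
        _ = g s := by ring
  -- the three integrabilities
  have hanti1 : Antitone fun s : ℝ => Φ1 * (m1 (Set.Ici s)).toReal := by
    intro a b hab
    exact mul_le_mul_of_nonneg_left
      (ENNReal.toReal_mono (measure_ne_top _ _) (measure_mono (Set.Ici_subset_Ici.2 hab))) hΦ1
  have hantim : Antitone fun s : ℝ => (Φ1 + Φ2) * (m (Set.Ici s)).toReal := by
    intro a b hab
    exact mul_le_mul_of_nonneg_left
      (ENNReal.toReal_mono (hmfin a) (measure_mono (Set.Ici_subset_Ici.2 hab))) hΦ12.le
  have hint1 : Integrable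
      (fun s => g s * Real.exp (-(∫ t in Set.Ici s, g t)) *
        Real.exp (-(Φ1 * (m1 (Set.Ici s)).toReal))) :=
    aux _ hanti1 fun s => mul_nonneg hΦ1 ENNReal.toReal_nonneg
  have hintm : Integrable
      (fun s => g s * Real.exp (-(∫ t in Set.Ici s, g t)) *
        Real.exp (-((Φ1 + Φ2) * (m (Set.Ici s)).toReal))) :=
    aux _ hantim fun s => mul_nonneg hΦ12.le ENNReal.toReal_nonneg
  have hkint : Integrable (fun s => g s * Real.exp (-(∫ t in Set.Ici s, g t))) := by
    have := aux (fun _ => 0) (fun a b _ => le_rfl) (fun _ => le_rfl)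
    simpa using this
  -- pointwise comparison of the two integrands
  have hpt : ∀ s : ℝ,
      g s * Real.exp (-(∫ t in Set.Ici s, g t)) * Real.exp (-(Φ1 * (m1 (Set.Ici s)).toReal))
      - g s * Real.exp (-(∫ t in Set.Ici s, g t)) *
          Real.exp (-((Φ1 + Φ2) * (m (Set.Ici s)).toReal))
      ≤ (1 - Real.exp (-Φ2)) * (g s * Real.exp (-(∫ t in Set.Ici s, g t))) := by
    intro s
    set K := g s * Real.exp (-(∫ t in Set.Ici s, g t)) with hK
    have hK0 : 0 ≤ K := mul_nonneg (hg0 s) (Real.exp_pos _).le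
    set A := Real.exp (-(Φ1 * (m1 (Set.Ici s)).toReal)) with hA
    set B := Real.exp (-(Φ2 * (m2 (Set.Ici s)).toReal)) with hB
    have hb1 : (m2 (Set.Ici s)).toReal ≤ 1 := by
      have := ENNReal.toReal_mono (by simp) (prob_le_one (μ := m2) (s := Set.Ici s))
      simpa using this
    have hsplitExp : Real.exp (-((Φ1 + Φ2) * (m (Set.Ici s)).toReal)) = A * B := by
      rw [hcs s, show -(Φ1 * (m1 (Set.Ici s)).toReal + Φ2 * (m2 (Set.Ici s)).toReal)
        = -(Φ1 * (m1 (Set.Ici s)).toReal) + -(Φ2 * (m2 (Set.Ici s)).toReal) by ring,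
        Real.exp_add]
    have hA1 : A ≤ 1 := Real.exp_le_one_iff.2 (neg_nonpos.2 (mul_nonneg hΦ1
      ENNReal.toReal_nonneg))
    have hB1 : B ≤ 1 := Real.exp_le_one_iff.2 (neg_nonpos.2 (mul_nonneg hΦ2.le
      ENNReal.toReal_nonneg))
    have hB2 : Real.exp (-Φ2) ≤ B := by
      apply Real.exp_le_exp.2
      have : Φ2 * (m2 (Set.Ici s)).toReal ≤ Φ2 :=
        mul_le_of_le_one_right hΦ2.le hb1
      linarith
    rw [hsplitExp]
    calc K * A - K * (A * B) = K * (A * (1 - B)) := by ring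
      _ ≤ K * (1 * (1 - Real.exp (-Φ2))) := by
          refine mul_le_mul_of_nonneg_left ?_ hK0
          exact mul_le_mul hA1 (by linarith) (by linarith) (by norm_num)
      _ = (1 - Real.exp (-Φ2)) * K := by ring
  -- the difference of the integrals
  have hints : (∫ s, g s * Real.exp (-(∫ t in Set.Ici s, g t)) *
        Real.exp (-(Φ1 * (m1 (Set.Ici s)).toReal)))
      - (∫ s, g s * Real.exp (-(∫ t in Set.Ici s, g t)) *
        Real.exp (-((Φ1 + Φ2) * (m (Set.Ici s)).toReal)))
      ≤ (1 - Real.exp (-Φ2)) * ∫ s, g s * Real.exp (-(∫ t in Set.Ici s, g t)) := by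
    rw [← integral_sub hint1 hintm, ← integral_const_mul]
    exact integral_mono (hint1.sub hintm) (hkint.const_mul _) hpt
  have hkey : (∫ s, g s * Real.exp (-(∫ t in Set.Ici s, g t)))
      ≤ 1 - Real.exp (-(∫ t, g t)) := key g hg hg0
  have hMnn : 0 ≤ ∫ t, g t := integral_nonneg hg0
  have hexpM1 : Real.exp (-(∫ t, g t)) ≤ 1 := Real.exp_le_one_iff.2 (neg_nonpos.2 hMnn)
  have hknn : 0 ≤ ∫ s, g s * Real.exp (-(∫ t in Set.Ici s, g t)) :=
    integral_nonneg fun s => mul_nonneg (hg0 s) (Real.exp_pos _).le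
  have hsmall : 1 - Real.exp (-Φ2) ≤ Φ2 := by
    have := Real.add_one_le_exp (-Φ2)
    linarith
  have hsnn : 0 ≤ 1 - Real.exp (-Φ2) := by
    have : Real.exp (-Φ2) ≤ 1 := Real.exp_le_one_iff.2 (by linarith)
    linarith
  -- the exponential bracket
  have hbr : Real.exp (-(Φ1 + ∫ t, g t)) - Real.exp (-(Φ1 + Φ2 + ∫ t, g t))
      ≤ (1 - Real.exp (-Φ2)) * Real.exp (-(∫ t, g t)) := by
    rw [show -(Φ1 + ∫ t, g t) = -Φ1 + -(∫ t, g t) by ring,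
      show -(Φ1 + Φ2 + ∫ t, g t) = -Φ1 + (-Φ2 + -(∫ t, g t)) by ring,
      Real.exp_add, Real.exp_add, Real.exp_add]
    have h1 : Real.exp (-Φ1) ≤ 1 := Real.exp_le_one_iff.2 (by linarith)
    have h2 : Real.exp (-Φ2) ≤ 1 := Real.exp_le_one_iff.2 (neg_nonpos.2 hΦ2.le)
    nlinarith [mul_nonneg (sub_nonneg.2 h1)
      (mul_nonneg (Real.exp_pos (-(∫ t, g t))).le (sub_nonneg.2 h2))]
  -- assemble
  have hsplit : shadedSun g (Φ1 + Φ2) m - shadedSun g Φ1 m1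
      = (Real.exp (-(Φ1 + ∫ t, g t)) - Real.exp (-(Φ1 + Φ2 + ∫ t, g t)))
      + ((∫ s, g s * Real.exp (-(∫ t in Set.Ici s, g t)) *
            Real.exp (-(Φ1 * (m1 (Set.Ici s)).toReal)))
        - ∫ s, g s * Real.exp (-(∫ t in Set.Ici s, g t)) *
            Real.exp (-((Φ1 + Φ2) * (m (Set.Ici s)).toReal))) := by
    simp only [shadedSun]
    ring
  rw [hsplit]
  calc (Real.exp (-(Φ1 + ∫ t, g t)) - Real.exp (-(Φ1 + Φ2 + ∫ t, g t)))
      + ((∫ s, g s * Real.exp (-(∫ t in Set.Ici s, g t)) *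
            Real.exp (-(Φ1 * (m1 (Set.Ici s)).toReal)))
        - ∫ s, g s * Real.exp (-(∫ t in Set.Ici s, g t)) *
            Real.exp (-((Φ1 + Φ2) * (m (Set.Ici s)).toReal)))
      ≤ (1 - Real.exp (-Φ2)) * Real.exp (-(∫ t, g t))
        + (1 - Real.exp (-Φ2)) * ∫ s, g s * Real.exp (-(∫ t in Set.Ici s, g t)) :=
        add_le_add hbr hints
    _ = (1 - Real.exp (-Φ2)) * (Real.exp (-(∫ t, g t))
        + ∫ s, g s * Real.exp (-(∫ t in Set.Ici s, g t))) := by ring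
    _ ≤ (1 - Real.exp (-Φ2)) * 1 := by
        refine mul_le_mul_of_nonneg_left ?_ hsnn
        linarith
    _ ≤ Φ2 := by linarith
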